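/- Let w be a nonempty word such that ShortBord(w) = Bord(w). Then ShortBord(ww) = ShortBord(w). -/

import Mathlib

open List Filter

/-- The Zimin pattern `Z_k` as a word over variables `0, 1, ..., k-1`
(`Z_0` is empty, `Z_{k+1} = Z_k · x_{k+1} · Z_k`). -/
def ziminWord : ℕ → List ℕ
  | 0 => []
  | k + 1 => ziminWord k ++ k :: ziminWord k

/-- `w` is the image of the Zimin pattern `Z_k` under a non-erasing morphism. -/
def IsZiminImage {α : Type*} (k : ℕ) (w : List α) : Prop :=
  ∃ h : ℕ → List α, (∀ i, h i ≠ []) ∧ w = (ziminWord k).flatMap h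

/-- The Zimin type of `w`: the maximum `k` such that `w` is an image of `Z_k`
under a non-erasing morphism (0 for the empty word). -/
noncomputable def ziminType {α : Type*} (w : List α) : ℕ :=
  sSup {k | IsZiminImage k w}

/-- The Zimin pattern `Z_k` embeds in `w`: some factor of `w` is an image of `Z_k`. -/
def ziminEmbeds {α : Type*} (k : ℕ) (w : List α) : Prop :=
  ∃ u : List α, u <:+: w ∧ IsZiminImage k u

/-- Length of the longest border (proper prefix that is also a proper suffix) of `w`. -/
noncomputable def bordLen {α : Type*} (w : List α) : ℕ :=
  sSup {j | w.take j <:+ w ∧ j < w.length}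

/-- Length of the longest short border (border of length `< |w|/2`) of `w`. -/
noncomputable def shortBordLen {α : Type*} (w : List α) : ℕ :=
  sSup {j | w.take j <:+ w ∧ 2 * j < w.length}

/-- The longest border of `w`. -/
noncomputable def bord {α : Type*} (w : List α) : List α := w.take (bordLen w)

/-- The longest short border of `w`. -/
noncomputable def shortBord {α : Type*} (w : List α) : List α := w.take (shortBordLen w)

/-- The Fibonacci words over `Bool` (`a = false`, `b = true`), with
`fibWord 0 = F_0 = a`, `fibWord 1 = F_1 = F_0 F_{-1} = ab`, `F_{n} = F_{n-1} F_{n-2}`. -/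
def fibWord : ℕ → List Bool
  | 0 => [false]
  | 1 => [false, true]
  | n + 2 => fibWord (n + 1) ++ fibWord n

/-- The Fibonacci numbers `Φ_n = |F_n|` (`Φ_0 = 1, Φ_1 = 2, Φ_2 = 3, ...`). -/
def Phi (n : ℕ) : ℕ := (fibWord n).length

/-- The infinite Fibonacci word `F_∞` (0-indexed letters). -/
def fibInf (i : ℕ) : Bool := (fibWord (i + 2)).getD i false

/-- The prefix `F_∞[1..n]` of the infinite Fibonacci word. -/
def fibPrefix (n : ℕ) : List Bool := (List.range n).map fibInf



private theorem aux_suffix_sq {α : Type*} {t w : List α} (ht : t <:+ w ++ w)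
    (hl : t.length ≤ w.length) : t <:+ w := by
  rw [List.suffix_iff_eq_drop] at ht ⊢
  have he : (w ++ w).length - t.length = w.length + (w.length - t.length) := by
    rw [List.length_append]; omega
  rw [he, List.drop_length_add_append] at ht
  exact ht

/-- Lemma 2: if `ShortBord(w) = Bord(w)` for a nonempty word `w`,
then `ShortBord(ww) = ShortBord(w)`. -/
theorem shortBord_square {α : Type*} (w : List α) (hw : w ≠ [])
    (h : shortBord w = bord w) :
    shortBord (w ++ w) = shortBord w := by
  have hlen : 0 < w.length := List.length_pos_iff.mpr hw
  have hset : {j | (w ++ w).take j <:+ (w ++ w) ∧ 2 * j < (w ++ w).length}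
      = {j | w.take j <:+ w ∧ j < w.length} := by
    ext j
    simp only [Set.mem_setOf_eq, List.length_append]
    constructor
    · rintro ⟨hs, hj⟩
      have hj' : j < w.length := by omega
      rw [List.take_append_of_le_length hj'.le] at hs
      exact ⟨aux_suffix_sq hs (by simp), hj'⟩
    · rintro ⟨hs, hj⟩
      refine ⟨?_, by omega⟩
      rw [List.take_append_of_le_length hj.le]
      exact hs.trans (List.suffix_append w w)
  have hne2 : ({j | w.take j <:+ w ∧ j < w.length} : Set ℕ).Nonempty :=
    ⟨0, by simp [List.nil_suffix], hlen⟩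
  have hbdd2 : BddAbove {j | w.take j <:+ w ∧ j < w.length} :=
    ⟨w.length, fun j hj => hj.2.le⟩
  have hmem : bordLen w ∈ {j | w.take j <:+ w ∧ j < w.length} :=
    Nat.sSup_mem hne2 hbdd2
  have hkey : shortBordLen (w ++ w) = bordLen w := by
    unfold shortBordLen bordLen
    rw [hset]
  rw [shortBord, hkey, List.take_append_of_le_length hmem.2.le, ← bord, ← h]
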